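/- Let α be a unital partial action of G on A with enveloping action (B,β), B = Σ_{g∈G} β_g(φ(A)) inside the function ring F of maps G → A, where β_g(f)(t) = f(g⁻¹t) and φ(a)(t) = α_{t⁻¹}(1_t a). Then every w ∈ Z⁰_par(G,A), i.e. every a ∈ A with α_g(1_{g⁻¹}a) = 1_g a for all g, has a unique globalization: there is a unique u ∈ M(B) with β*_g(u) = u for all g and φ(1_A)u = φ(w); explicitly, u is the constant function with value w. -/

import Mathlib

section

variable {G : Type*} [Group G] {A : Type*} [Ring A]

/-- The embedding `φ : A → F`, `φ(a)(t) = α_{t⁻¹}(1_t a)`, of `A` into the ring `F` of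
functions `G → A`. -/
def phiF (e : G → A) (act : G → A → A) (a : A) : G → A := fun t => act t⁻¹ (e t * a)

/-- The global action `β` of `G` on the function ring `F = (G → A)`:
`β_g(f)(t) = f(g⁻¹ t)`. -/
def betaF (g : G) (f : G → A) : G → A := fun t => f (g⁻¹ * t)

/-- The subring `B = Σ_{g ∈ G} β_g(φ(A))` of `F` underlying the enveloping action, as an
additive subgroup of `F`. -/
def envB (e : G → A) (act : G → A → A) : AddSubgroup (G → A) :=
  AddSubgroup.closure (⋃ g : G, betaF g '' Set.range (phiF e act))

/-- Every partial `0`-cocycle `w ∈ Z⁰_par(G,A)` (i.e. `α_g(1_{g⁻¹}w) = 1_g w` for all `g`)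
has a unique globalization in the multiplier algebra of `B`: the constant function `u₀ ≡ w`
is a multiplier of `B`, is `β`-invariant, satisfies `φ(1_A)u₀ = φ(w)`, and any
`β`-invariant multiplier `u` of `B` with `φ(1_A)u = φ(w)` agrees with `u₀` as a multiplier
of `B`. -/
theorem zeroCocycle_unique_globalization
    (e : G → A) (act : G → A → A)
    (he_central : ∀ g a, e g * a = a * e g)
    (he_idem : ∀ g, e g * e g = e g)
    (he_one : e 1 = 1)
    (hact_one : ∀ a, act 1 a = a)
    (hrange : ∀ g a, e g * act g (e g⁻¹ * a) = act g (e g⁻¹ * a))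
    (hadd : ∀ g a b, act g (e g⁻¹ * a + e g⁻¹ * b) = act g (e g⁻¹ * a) + act g (e g⁻¹ * b))
    (hmul : ∀ g a b, act g ((e g⁻¹ * a) * (e g⁻¹ * b)) = act g (e g⁻¹ * a) * act g (e g⁻¹ * b))
    (hbij : ∀ g, Set.BijOn (act g) {x | e g⁻¹ * x = x} {x | e g * x = x})
    (hcomp : ∀ g h a, e h⁻¹ * a = a → e g⁻¹ * act h a = act h a →
      e (g * h)⁻¹ * a = a ∧ act g (act h a) = act (g * h) a)
    (w : A) (hw : ∀ g, act g (e g⁻¹ * w) = e g * w) :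
    ((∀ b ∈ envB e act, (fun _ : G => w) * b ∈ envB e act ∧ b * (fun _ : G => w) ∈ envB e act) ∧
     (∀ (g : G) (f : G → A), betaF g ((fun _ : G => w) * f) = (fun _ : G => w) * betaF g f) ∧
     phiF e act 1 * (fun _ : G => w) = phiF e act w) ∧
    (∀ u : G → A,
      (∀ b ∈ envB e act, u * b ∈ envB e act ∧ b * u ∈ envB e act) →
      (∀ (g : G) (b : G → A), b ∈ envB e act →
        betaF g (u * b) = u * betaF g b ∧ betaF g (b * u) = betaF g b * u) →
      phiF e act 1 * u = phiF e act w →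
      ∀ b ∈ envB e act, u * b = (fun _ : G => w) * b ∧ b * u = b * (fun _ : G => w)) := by
  -- collapsing lemma for the central idempotents
  have ecollapse : ∀ (s : G) (x y : A), (e s * x) * (e s * y) = e s * (x * y) := by
    intro s x y
    rw [mul_assoc, ← mul_assoc x, ← he_central, ← mul_assoc, ← mul_assoc, he_idem, mul_assoc]
  -- left and right multiplication by `w` inside the image of `act s`
  have key : ∀ (s : G) (a : A), w * act s (e s⁻¹ * a) = act s (e s⁻¹ * (w * a)) := by
    intro s a
    calc w * act s (e s⁻¹ * a)
        = w * (e s * act s (e s⁻¹ * a)) := by rw [hrange]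
      _ = (e s * w) * act s (e s⁻¹ * a) := by rw [← mul_assoc, he_central s w]
      _ = act s (e s⁻¹ * w) * act s (e s⁻¹ * a) := by rw [hw]
      _ = act s ((e s⁻¹ * w) * (e s⁻¹ * a)) := (hmul s w a).symm
      _ = act s (e s⁻¹ * (w * a)) := by rw [ecollapse]
  have keyr : ∀ (s : G) (a : A), act s (e s⁻¹ * a) * w = act s (e s⁻¹ * (a * w)) := by
    intro s a
    calc act s (e s⁻¹ * a) * w
        = (e s * act s (e s⁻¹ * a)) * w := by rw [hrange]
      _ = (act s (e s⁻¹ * a) * e s) * w := by rw [he_central s (act s (e s⁻¹ * a))]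
      _ = act s (e s⁻¹ * a) * (e s * w) := by rw [mul_assoc]
      _ = act s (e s⁻¹ * a) * act s (e s⁻¹ * w) := by rw [hw]
      _ = act s ((e s⁻¹ * a) * (e s⁻¹ * w)) := (hmul s a w).symm
      _ = act s (e s⁻¹ * (a * w)) := by rw [ecollapse]
  -- generators
  have memB : ∀ (g : G) (a : A), betaF g (phiF e act a) ∈ envB e act := by
    intro g a
    exact AddSubgroup.subset_closure
      (Set.mem_iUnion.2 ⟨g, ⟨phiF e act a, ⟨a, rfl⟩, rfl⟩⟩)
  have gen_left : ∀ (g : G) (a : A),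
      (fun _ : G => w) * betaF g (phiF e act a) = betaF g (phiF e act (w * a)) := by
    intro g a
    funext t
    simp only [Pi.mul_apply, betaF, phiF]
    have h := key (g⁻¹ * t)⁻¹ a
    rw [inv_inv] at h
    exact h
  have gen_right : ∀ (g : G) (a : A),
      betaF g (phiF e act a) * (fun _ : G => w) = betaF g (phiF e act (a * w)) := by
    intro g a
    funext t
    simp only [Pi.mul_apply, betaF, phiF]
    have h := keyr (g⁻¹ * t)⁻¹ a
    rw [inv_inv] at h
    exact h
  have mult : ∀ b ∈ envB e act,
      (fun _ : G => w) * b ∈ envB e act ∧ b * (fun _ : G => w) ∈ envB e act := by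
    intro b hb
    induction hb using AddSubgroup.closure_induction with
    | mem x hx =>
        obtain ⟨g, y, ⟨a, rfl⟩, rfl⟩ : ∃ g y, y ∈ Set.range (phiF e act) ∧ betaF g y = x := by
          simpa [Set.mem_iUnion] using hx
        exact ⟨by rw [gen_left]; exact memB g (w * a),
               by rw [gen_right]; exact memB g (a * w)⟩
    | zero => rw [mul_zero, zero_mul]; exact ⟨zero_mem _, zero_mem _⟩
    | add x y hx hy ihx ihy =>
        rw [mul_add, add_mul]; exact ⟨add_mem ihx.1 ihy.1, add_mem ihx.2 ihy.2⟩
    | neg x hx ih => rw [mul_neg, neg_mul]; exact ⟨neg_mem ih.1, neg_mem ih.2⟩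
  -- β-invariance of the constant function
  have binv : ∀ (g : G) (f : G → A),
      betaF g ((fun _ : G => w) * f) = (fun _ : G => w) * betaF g f := by
    intro g f; funext t; rfl
  -- φ(1) * u₀ = φ(w)
  have hphiw : phiF e act 1 * (fun _ : G => w) = phiF e act w := by
    funext t
    simp only [Pi.mul_apply, phiF]
    have hr := hrange t⁻¹ 1
    rw [inv_inv] at hr
    have hw' := hw t⁻¹
    rw [inv_inv] at hw'
    have hm := hmul t⁻¹ 1 w
    rw [inv_inv] at hm
    calc act t⁻¹ (e t * 1) * w
        = (e t⁻¹ * act t⁻¹ (e t * 1)) * w := by rw [hr]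
      _ = act t⁻¹ (e t * 1) * (e t⁻¹ * w) := by rw [he_central t⁻¹ (act t⁻¹ (e t * 1)), mul_assoc]
      _ = act t⁻¹ (e t * 1) * act t⁻¹ (e t * w) := by rw [hw']
      _ = act t⁻¹ ((e t * 1) * (e t * w)) := hm.symm
      _ = act t⁻¹ (e t * w) := by rw [ecollapse, one_mul]
  refine ⟨⟨mult, binv, hphiw⟩, ?_⟩
  -- uniqueness
  intro u _hmul_u hequiv hphi
  have phi1B : phiF e act 1 ∈ envB e act := by
    have h : phiF e act 1 = betaF 1 (phiF e act 1) := by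
      funext t; simp [betaF]
    rw [h]; exact memB 1 1
  have hphi11 : phiF e act 1 1 = 1 := by
    simp [phiF, he_one, hact_one]
  have hphiw1 : phiF e act w 1 = w := by
    simp [phiF, he_one, hact_one]
  have hu : ∀ t, u t = w := by
    intro t
    have h1 := congrFun ((hequiv t _ phi1B).2) t
    simp only [betaF, Pi.mul_apply, inv_mul_cancel] at h1
    rw [hphi11, one_mul, one_mul] at h1
    -- h1 : u 1 = u t
    have h2 := congrFun hphi 1
    simp only [Pi.mul_apply] at h2
    rw [hphi11, one_mul, hphiw1] at h2
    rw [← h1, h2]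
  have hu' : u = fun _ : G => w := funext hu
  intro b _hb
  rw [hu']
  exact ⟨rfl, rfl⟩

end
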